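/- Fix m, N ∈ ℕ⁺ and ρ ∈ (0,1), and let ν be the self-similar measure satisfying ν = (1/(2Nm)) ∑_{d=0}^{2Nm-1} ν ∘ τ_d^{-1}, where τ_d(x) = (-1)^{⌊d/m⌋} ρ (x + d). Then the Fourier transform ν̂ satisfies ν̂(-t) = e^{2πi m ρ t} ν̂(t) for all t ∈ ℝ. -/

import Mathlib

open MeasureTheory
open scoped ENNReal

private lemma char_integrable (μ : Measure ℝ) [IsFiniteMeasure μ] (s : ℝ) {g : ℝ → ℝ}
    (hg : Measurable g) :
    Integrable (fun x => Complex.exp (2 * (Real.pi : ℂ) * Complex.I * (s : ℂ) * ((g x : ℝ) : ℂ))) μ := by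
  apply Integrable.mono' (integrable_const (1 : ℝ))
  · exact Complex.continuous_exp.comp_aestronglyMeasurable
      ((Complex.measurable_ofReal.comp hg).aestronglyMeasurable.const_mul _)
  · filter_upwards with x
    rw [Complex.norm_exp]
    simp

/-- if `ν` is the self-similar probability measure for the IFS
`τ_d(x) = (-1)^{⌊d/m⌋} ρ (x+d)`, `d = 0,...,2Nm-1`, with equal weights, then
`ν̂(-t) = e^{2πi m ρ t} ν̂(t)` for all `t ∈ ℝ`. -/
theorem ft_reflection (m N : ℕ) (hm : 0 < m) (hN : 0 < N) (ρ : ℝ)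
    (hρ : ρ ∈ Set.Ioo (0 : ℝ) 1) (ν : Measure ℝ) [IsProbabilityMeasure ν]
    (hself : ν = (2 * N * m : ℝ≥0∞)⁻¹ • ∑ d ∈ Finset.range (2 * N * m),
      Measure.map (fun x : ℝ => (-1 : ℝ) ^ (d / m) * ρ * (x + (d : ℝ))) ν) :
    ∀ t : ℝ, (∫ x, Complex.exp (2 * (Real.pi : ℂ) * Complex.I * ((-t : ℝ) : ℂ) * (x : ℂ)) ∂ν)
      = Complex.exp (2 * (Real.pi : ℂ) * Complex.I * ((m : ℂ) * (ρ : ℂ)) * (t : ℂ)) *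
        ∫ x, Complex.exp (2 * (Real.pi : ℂ) * Complex.I * (t : ℂ) * (x : ℂ)) ∂ν := by
  intro t
  set τ : ℕ → ℝ → ℝ := fun d x => (-1 : ℝ) ^ (d / m) * ρ * (x + (d : ℝ)) with hτ
  have hτm : ∀ d, Measurable (τ d) := fun d => by
    simpa [hτ] using (measurable_id.add_const (d : ℝ)).const_mul ((-1 : ℝ) ^ (d / m) * ρ)
  -- one-step expansion of the Fourier transform using self-similarity
  have hexp : ∀ s : ℝ,
      (∫ x, Complex.exp (2 * (Real.pi : ℂ) * Complex.I * (s : ℂ) * (x : ℂ)) ∂ν)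
      = ((2 * N * m : ℝ≥0∞)⁻¹).toReal • ∑ d ∈ Finset.range (2 * N * m),
          ∫ x, Complex.exp (2 * (Real.pi : ℂ) * Complex.I * (s : ℂ) * ((τ d x : ℝ) : ℂ)) ∂ν := by
    intro s
    conv_lhs => rw [hself]
    rw [integral_smul_measure, integral_finset_sum_measure ?_]
    · congr 1
      refine Finset.sum_congr rfl fun d _ => ?_
      exact integral_map (hτm d).aemeasurable
        (Complex.continuous_exp.comp_aestronglyMeasurable
          (Complex.measurable_ofReal.aestronglyMeasurable.const_mul _))
    · intro d _
      haveI : IsProbabilityMeasure (Measure.map (τ d) ν) :=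
        Measure.isProbabilityMeasure_map (hτm d).aemeasurable
      exact char_integrable _ s measurable_id
  -- the involution pairing `d` with `d ± m` (which flips the sign of the map)
  set σ : ℕ → ℕ := fun d => if d / m % 2 = 0 then d + m else d - m with hσ
  have hσ_even : ∀ d, d / m % 2 = 0 → σ d = d + m := by
    intro d h; simp only [hσ]; exact if_pos h
  have hσ_odd : ∀ d, d / m % 2 ≠ 0 → σ d = d - m := by
    intro d h; simp only [hσ]; exact if_neg h
  have hdiv : ∀ d, d < 2 * N * m → d / m < 2 * N := fun d hd =>
    Nat.div_lt_of_lt_mul (by linarith [hd])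
  have hle : ∀ d : ℕ, d / m % 2 ≠ 0 → m ≤ d := by
    intro d h
    have h0 : d / m ≠ 0 := fun h0 => h (by rw [h0])
    exact (Nat.one_le_div_iff hm).mp (Nat.pos_of_ne_zero h0)
  have hsubdiv : ∀ d : ℕ, m ≤ d → (d - m) / m = d / m - 1 := by
    intro d hmd
    have h1 : (d - m + m) / m = (d - m) / m + 1 := Nat.add_div_right _ hm
    rw [Nat.sub_add_cancel hmd] at h1
    exact Nat.eq_sub_of_add_eq h1.symm
  have hmem : ∀ d ∈ Finset.range (2 * N * m), σ d ∈ Finset.range (2 * N * m) := by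
    intro d hd
    rw [Finset.mem_range] at hd ⊢
    have hk := hdiv d hd
    by_cases h : d / m % 2 = 0
    · rw [hσ_even d h]
      have h2 : d < m * (d / m + 1) := Nat.lt_mul_div_succ d hm
      have h1 : d / m + 2 ≤ 2 * N := by
        generalize d / m = q at h hk; omega
      calc d + m < m * (d / m + 1) + m := Nat.add_lt_add_right h2 m
        _ = m * (d / m + 2) := by ring
        _ ≤ m * (2 * N) := Nat.mul_le_mul_left m h1
        _ = 2 * N * m := by ring
    · rw [hσ_odd d h]
      exact lt_of_le_of_lt (Nat.sub_le d m) hd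
  have hinv : ∀ d ∈ Finset.range (2 * N * m), σ (σ d) = d := by
    intro d _
    by_cases h : d / m % 2 = 0
    · have h2 : (d + m) / m = d / m + 1 := Nat.add_div_right d hm
      have h3 : (d + m) / m % 2 ≠ 0 := by
        rw [h2]; generalize d / m = q at h ⊢; omega
      rw [hσ_even d h, hσ_odd (d + m) h3, Nat.add_sub_cancel]
    · have hmd := hle d h
      have h2 : (d - m) / m = d / m - 1 := hsubdiv d hmd
      have hq : 1 ≤ d / m := (Nat.one_le_div_iff hm).mpr hmd
      have h3 : (d - m) / m % 2 = 0 := by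
        rw [h2]; generalize d / m = q at h hq ⊢; omega
      rw [hσ_odd d h, hσ_even (d - m) h3, Nat.sub_add_cancel hmd]
  -- term-by-term identity
  have hterm : ∀ d ∈ Finset.range (2 * N * m),
      (∫ x, Complex.exp (2 * (Real.pi : ℂ) * Complex.I * ((-t : ℝ) : ℂ) * ((τ d x : ℝ) : ℂ)) ∂ν)
      = Complex.exp (2 * (Real.pi : ℂ) * Complex.I * ((m : ℂ) * (ρ : ℂ)) * (t : ℂ)) *
        ∫ x, Complex.exp (2 * (Real.pi : ℂ) * Complex.I * (t : ℂ) * ((τ (σ d) x : ℝ) : ℂ)) ∂ν := by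
    intro d _
    rw [← integral_const_mul]
    refine integral_congr_ae (Filter.Eventually.of_forall fun x => ?_)
    dsimp only
    rw [← Complex.exp_add]
    congr 1
    by_cases h : d / m % 2 = 0
    · have h2 : (d + m) / m = d / m + 1 := Nat.add_div_right d hm
      have hp1 : (-1 : ℝ) ^ (d / m) = 1 := Even.neg_one_pow (Nat.even_iff.mpr h)
      have hp2 : (-1 : ℝ) ^ ((d + m) / m) = -1 := by
        rw [h2]
        exact Odd.neg_one_pow (Nat.odd_iff.mpr (by generalize d / m = q at h ⊢; omega))
      rw [hσ_even d h]
      simp only [hτ, hp1, hp2]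
      push_cast
      ring
    · have hmd := hle d h
      have h2 : (d - m) / m = d / m - 1 := hsubdiv d hmd
      have hq : 1 ≤ d / m := (Nat.one_le_div_iff hm).mpr hmd
      have hp1 : (-1 : ℝ) ^ (d / m) = -1 := Odd.neg_one_pow (Nat.odd_iff.mpr
        (by generalize d / m = q at h ⊢; omega))
      have hp2 : (-1 : ℝ) ^ ((d - m) / m) = 1 := by
        rw [h2]
        exact Even.neg_one_pow (Nat.even_iff.mpr
          (by generalize d / m = q at h hq ⊢; omega))
      rw [hσ_odd d h]
      simp only [hτ, hp1, hp2]
      push_cast [Nat.cast_sub hmd]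
      ring
  rw [hexp (-t), hexp t, mul_smul_comm]
  congr 1
  rw [Finset.mul_sum]
  exact Finset.sum_nbij' σ σ hmem hmem hinv hinv hterm
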